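/- With the setting of weights Wᵢ summing to Id and subspaces Hᵢ = (ker Wᵢ)^⊥, let 𝒮 = ran Σ* = {x ∈ ∏ᵢHᵢ : ∃x∈H, xᵢ = P_{Hᵢ}x for all i}. Then Σ*Σ restricted to 𝒮 is the identity on 𝒮. -/

import Mathlib

open RealInnerProductSpace

/-- with the same setting of weights and subspaces, Σ*Σ restricted
to 𝒮 = ran Σ* is the identity on 𝒮: for x ∈ 𝒮, Σ*(Σx) = x. -/
theorem sigma_star_sigma_id_on_S
    {H : Type*} [NormedAddCommGroup H] [InnerProductSpace ℝ H] [CompleteSpace H]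
    (n : ℕ) (W : Fin n → H →L[ℝ] H) (Hsub : Fin n → Submodule ℝ H)
    [∀ i, CompleteSpace (Hsub i)]
    (hWsa : ∀ i, IsSelfAdjoint (W i))
    (hWpos : ∀ i, ∀ x, 0 ≤ ⟪W i x, x⟫)
    (hker : ∀ i, LinearMap.ker (W i : H →ₗ[ℝ] H) = (Hsub i)ᗮ)
    (hWstrong : ∀ i, ∃ c : ℝ, 0 < c ∧ ∀ x ∈ Hsub i, c * ‖x‖ ^ 2 ≤ ⟪W i x, x⟫)
    (hsum : ∀ x : H, ∑ i, W i x = x) :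
    ∀ x : Fin n → H,
      (∃ a : H, ∀ i, x i = (Submodule.orthogonalProjection (Hsub i) a : H)) →
      ∀ i, (Submodule.orthogonalProjection (Hsub i) (∑ j, W j (x j)) : H) = x i := by
  rintro x ⟨a, ha⟩ i
  have key : ∀ j, W j (x j) = W j a := by
    intro j
    have hmem : a - x j ∈ LinearMap.ker (W j : H →ₗ[ℝ] H) := by
      rw [hker j, ha j]
      exact Submodule.sub_starProjection_mem_orthogonal (K := Hsub j) a
    have : W j (a - x j) = 0 := hmem
    rw [map_sub] at this
    exact (sub_eq_zero.mp this).symm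
  simp only [key]
  rw [hsum a]
  exact (ha i).symm
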